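/- Let 𝒮 be a sharp fs monoid and V ∈ V(𝒮), i.e. a valuative submonoid of 𝒮^gp containing 𝒮 with V^× ∩ 𝒮 = {1}. Define r_V(f,g) = sup{a/b : (a,b) ∈ ℕ² \ {(0,0)}, f^b g^{-a} ∈ V} for (f,g) ∈ (𝒮 × 𝒮) \ {(1,1)}. Then r_V ∈ R(𝒮), i.e. r_V satisfies: r_V(g,f) = r_V(f,g)⁻¹; r_V(f,g)r_V(g,h) = r_V(f,h) whenever {r_V(f,g), r_V(g,h)} ≠ {0,∞}; and r_V(fg,h) = r_V(f,h) + r_V(g,h). -/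

import Mathlib

open scoped ENNReal

/-- For a valuative submonoid `V` of an abelian group `L`, the ratio
`r_V(f,g) = sup{a/b : (a,b) ≠ (0,0), f^b g^{-a} ∈ V} ∈ [0,∞]`. -/
noncomputable def rV {L : Type*} [CommGroup L] (V : Submonoid L) (f g : L) : ℝ≥0∞ :=
  sSup {x : ℝ≥0∞ | ∃ a b : ℕ, (a, b) ≠ (0, 0) ∧ f ^ b * (g ^ a)⁻¹ ∈ V ∧
    x = (a : ℝ≥0∞) / (b : ℝ≥0∞)}

open scoped NNReal

section Frac

lemma coe_nfrac (a b : ℕ) (hb : b ≠ 0) :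
    (a : ℝ≥0∞) / (b : ℝ≥0∞) = (((a : ℝ≥0) / (b : ℝ≥0) : ℝ≥0) : ℝ≥0∞) := by
  rw [ENNReal.coe_div (by exact_mod_cast hb)]
  norm_cast

lemma nfrac_ne_top {a b : ℕ} (hb : b ≠ 0) : (a : ℝ≥0∞) / (b : ℝ≥0∞) ≠ ⊤ := by
  rw [coe_nfrac a b hb]; exact ENNReal.coe_ne_top

lemma nfrac_lt_nfrac {a b c d : ℕ} (hb : b ≠ 0) (hd : d ≠ 0) :
    ((a : ℝ≥0∞) / b < (c : ℝ≥0∞) / d) ↔ a * d < c * b := by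
  rw [coe_nfrac a b hb, coe_nfrac c d hd, ENNReal.coe_lt_coe,
    div_lt_div_iff₀ (by exact_mod_cast Nat.pos_of_ne_zero hb)
      (by exact_mod_cast Nat.pos_of_ne_zero hd)]
  exact_mod_cast Iff.rfl

lemma nfrac_add (a b c d : ℕ) (hb : b ≠ 0) (hd : d ≠ 0) :
    (a : ℝ≥0∞) / b + (c : ℝ≥0∞) / d = ((a * d + c * b : ℕ) : ℝ≥0∞) / ((b * d : ℕ) : ℝ≥0∞) := by
  rw [coe_nfrac a b hb, coe_nfrac c d hd, coe_nfrac _ _ (by positivity), ← ENNReal.coe_add]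
  congr 1
  push_cast
  rw [div_add_div _ _ (by exact_mod_cast hb) (by exact_mod_cast hd)]
  ring_nf

lemma nfrac_mul (a b c d : ℕ) (hb : b ≠ 0) (hd : d ≠ 0) :
    ((a : ℝ≥0∞) / b) * ((c : ℝ≥0∞) / d) = ((a * c : ℕ) : ℝ≥0∞) / ((b * d : ℕ) : ℝ≥0∞) := by
  rw [coe_nfrac a b hb, coe_nfrac c d hd, coe_nfrac _ _ (by positivity), ← ENNReal.coe_mul]
  congr 1
  push_cast
  rw [div_mul_div_comm]

lemma nfrac_inv (a b : ℕ) (ha : a ≠ 0) (hb : b ≠ 0) :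
    ((a : ℝ≥0∞) / b)⁻¹ = (b : ℝ≥0∞) / a := by
  rw [coe_nfrac a b hb, coe_nfrac b a ha, ← ENNReal.coe_inv (by
    have : ((a : ℝ≥0) / b) ≠ 0 := by positivity
    exact this)]
  congr 1
  rw [inv_div]

lemma exists_natfrac_btwn {x y : ℝ≥0∞} (h : x < y) :
    ∃ p q : ℕ, q ≠ 0 ∧ x < (p : ℝ≥0∞) / q ∧ (p : ℝ≥0∞) / q < y := by
  obtain ⟨r, hr0, hxr, hry⟩ := ENNReal.lt_iff_exists_rat_btwn.1 h
  refine ⟨r.num.toNat, r.den, r.den_nz, ?_, ?_⟩ <;>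
  · have : ((r.num.toNat : ℝ≥0∞)) / (r.den : ℝ≥0∞) = (Real.toNNReal r : ℝ≥0∞) := by
      rw [coe_nfrac _ _ r.den_nz]
      congr 1
      apply NNReal.coe_injective
      push_cast
      rw [Real.coe_toNNReal _ (by exact_mod_cast hr0)]
      rw [Rat.cast_def]
      congr 1
      exact_mod_cast Int.toNat_of_nonneg (Rat.num_nonneg.2 hr0)
    rw [this]
    assumption

lemma sSup_add_sSup_le {A B : Set ℝ≥0∞} (hA : A.Nonempty) (hB : B.Nonempty) {c : ℝ≥0∞}
    (hle : ∀ x ∈ A, ∀ y ∈ B, x + y ≤ c) : sSup A + sSup B ≤ c := by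
  haveI := hA.to_subtype
  haveI := hB.to_subtype
  rw [sSup_eq_iSup', sSup_eq_iSup', ENNReal.iSup_add]
  refine iSup_le fun x => ?_
  rw [ENNReal.add_iSup]
  exact iSup_le fun y => hle x x.2 y y.2

lemma sSup_mul_sSup_le {A B : Set ℝ≥0∞} {c : ℝ≥0∞}
    (hle : ∀ x ∈ A, ∀ y ∈ B, x * y ≤ c) : sSup A * sSup B ≤ c := by
  rw [sSup_eq_iSup', sSup_eq_iSup', ENNReal.iSup_mul]
  refine iSup_le fun x => ?_
  rw [ENNReal.mul_iSup]
  exact iSup_le fun y => hle x x.2 y y.2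

end Frac

section Ident

variable {L : Type*} [CommGroup L]

lemma ident_add (f g h : L) (a b c d : ℕ) :
    (f ^ b * (h ^ a)⁻¹) ^ d * (g ^ d * (h ^ c)⁻¹) ^ b
      = (f * g) ^ (b * d) * (h ^ (a * d + c * b))⁻¹ := by
  simp only [← zpow_natCast]
  push_cast
  rw [← Equiv.apply_eq_iff_eq Additive.ofMul]
  simp only [ofMul_mul, ofMul_zpow, ofMul_inv]
  module

lemma ident_add_contra (f g h : L) (a b p q p' q' : ℕ) :
    (h ^ p * (f ^ q)⁻¹) ^ (b * q') * (h ^ p' * (g ^ q')⁻¹) ^ (b * q)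
        * ((f * g) ^ b * (h ^ a)⁻¹) ^ (q * q')
      = h ^ ((p * q' + p' * q) * b) * (h ^ (a * (q * q')))⁻¹ := by
  simp only [← zpow_natCast]
  push_cast
  rw [← Equiv.apply_eq_iff_eq Additive.ofMul]
  simp only [ofMul_mul, ofMul_zpow, ofMul_inv]
  module

lemma ident_mul (f g h : L) (a b c d : ℕ) :
    (f ^ b * (g ^ a)⁻¹) ^ d * (g ^ d * (h ^ c)⁻¹) ^ a
      = f ^ (b * d) * (h ^ (a * c))⁻¹ := by
  simp only [← zpow_natCast]
  push_cast
  rw [← Equiv.apply_eq_iff_eq Additive.ofMul]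
  simp only [ofMul_mul, ofMul_zpow, ofMul_inv]
  module

lemma ident_mul_contra (f g h : L) (a b p q p' q' : ℕ) :
    (g ^ p * (f ^ q)⁻¹) ^ (b * q') * (h ^ p' * (g ^ q')⁻¹) ^ (b * p)
        * (f ^ b * (h ^ a)⁻¹) ^ (q * q')
      = h ^ (p * p' * b) * (h ^ (a * (q * q')))⁻¹ := by
  simp only [← zpow_natCast]
  push_cast
  rw [← Equiv.apply_eq_iff_eq Additive.ofMul]
  simp only [ofMul_mul, ofMul_zpow, ofMul_inv]
  module

lemma ident_inv_contra (f g : L) (a b c d : ℕ) :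
    (f ^ d * (g ^ c)⁻¹) ^ a * (g ^ b * (f ^ a)⁻¹) ^ d
      = g ^ (b * d) * (g ^ (c * a))⁻¹ := by
  simp only [← zpow_natCast]
  push_cast
  rw [← Equiv.apply_eq_iff_eq Additive.ofMul]
  simp only [ofMul_mul, ofMul_zpow, ofMul_inv]
  module

lemma pow_split (h : L) (E1 E2 m : ℕ) (he : E2 = E1 + (m + 1)) :
    h ^ E1 * (h ^ E2)⁻¹ = (h ^ (m + 1))⁻¹ := by
  rw [he, pow_add, mul_inv_rev]
  group

end Ident

section RVlem

variable {L : Type*} [CommGroup L] {S V : Submonoid L} {f g : L}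

lemma le_rV {a b : ℕ} (h0 : (a, b) ≠ (0, 0)) (h : f ^ b * (g ^ a)⁻¹ ∈ V) :
    (a : ℝ≥0∞) / b ≤ rV V f g :=
  le_sSup ⟨a, b, h0, h, rfl⟩

lemma exists_of_lt_rV {z : ℝ≥0∞} (h : z < rV V f g) :
    ∃ a b : ℕ, (a, b) ≠ (0, 0) ∧ f ^ b * (g ^ a)⁻¹ ∈ V ∧ z < (a : ℝ≥0∞) / b := by
  obtain ⟨x, hx, hzx⟩ := lt_sSup_iff.1 h
  obtain ⟨a, b, h0, hm, rfl⟩ := hx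
  exact ⟨a, b, h0, hm, hzx⟩

lemma not_mem_of_rV_lt {a b : ℕ} (h0 : (a, b) ≠ (0, 0)) (h : rV V f g < (a : ℝ≥0∞) / b) :
    f ^ b * (g ^ a)⁻¹ ∉ V := fun hm => h.not_ge (le_rV h0 hm)

lemma swap_mem (hval : ∀ x : L, x ∈ V ∨ x⁻¹ ∈ V) {a b : ℕ}
    (h : f ^ b * (g ^ a)⁻¹ ∉ V) : g ^ a * (f ^ b)⁻¹ ∈ V := by
  rcases hval (f ^ b * (g ^ a)⁻¹) with h' | h'
  · exact absurd h' h
  · simpa [mul_inv_rev, mul_comm] using h'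

lemma inv_pow_not_mem (hSV : S ≤ V)
    (hunit : ∀ x : L, x ∈ S → x ∈ V → x⁻¹ ∈ V → x = 1)
    {x : L} (hx : x ∈ S) (hx1 : x ≠ 1) {n : ℕ} (hn : n ≠ 0) : (x ^ n)⁻¹ ∉ V := by
  intro hmem
  obtain ⟨m, rfl⟩ := Nat.exists_eq_succ_of_ne_zero hn
  apply hx1
  apply hunit x hx (hSV hx)
  have hxm : x ^ m ∈ V := hSV (pow_mem hx m)
  have key : (x ^ (m + 1))⁻¹ * x ^ m = x⁻¹ := by
    rw [pow_succ]; group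
  rw [← key]
  exact mul_mem hmem hxm

lemma rV_one_right (V : Submonoid L) (f : L) : rV V f 1 = ⊤ := by
  refine top_le_iff.mp ?_
  have h := le_rV (V := V) (f := f) (g := (1 : L)) (a := 1) (b := 0) (by simp)
    (by simpa using one_mem V)
  simpa [ENNReal.div_zero] using h

lemma rV_one_left (hSV : S ≤ V)
    (hunit : ∀ x : L, x ∈ S → x ∈ V → x⁻¹ ∈ V → x = 1)
    (hg : g ∈ S) (hg1 : g ≠ 1) : rV V 1 g = 0 := by
  refine le_antisymm (sSup_le ?_) zero_le
  rintro x ⟨a, b, h0, hm, rfl⟩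
  rcases Nat.eq_zero_or_pos a with rfl | ha
  · simp
  · exact absurd (by simpa using hm) (inv_pow_not_mem hSV hunit hg hg1 ha.ne')

end RVlem

section Main

variable {L : Type*} [CommGroup L] {S V : Submonoid L}

lemma rV_part1 (hval : ∀ x : L, x ∈ V ∨ x⁻¹ ∈ V) (hSV : S ≤ V)
    (hunit : ∀ x : L, x ∈ S → x ∈ V → x⁻¹ ∈ V → x = 1)
    {f g : L} (hf : f ∈ S) (hg : g ∈ S) (hfg1 : (f, g) ≠ (1, 1)) :
    rV V g f = (rV V f g)⁻¹ := by
  by_cases hg1 : g = 1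
  · subst hg1
    have hf1 : f ≠ 1 := by simpa using hfg1
    rw [rV_one_left hSV hunit hf hf1, rV_one_right]
    simp
  by_cases hf1 : f = 1
  · subst hf1
    rw [rV_one_right, rV_one_left hSV hunit hg hg1]
    simp
  apply le_antisymm
  · refine sSup_le ?_
    rintro x ⟨a, b, h0, hmem, rfl⟩
    rcases Nat.eq_zero_or_pos a with rfl | ha
    · simp
    rcases Nat.eq_zero_or_pos b with rfl | hb
    · exact absurd (by simpa using hmem) (inv_pow_not_mem hSV hunit hf hf1 ha.ne')
    rw [← inv_inv ((a : ℝ≥0∞) / b)]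
    refine ENNReal.inv_le_inv' ?_
    rw [nfrac_inv a b ha.ne' hb.ne']
    by_contra hcon
    push_neg at hcon
    obtain ⟨c, d, h0', hm', hlt⟩ := exists_of_lt_rV hcon
    rcases Nat.eq_zero_or_pos d with rfl | hd
    · have hc : c ≠ 0 := by rintro rfl; exact h0' rfl
      exact absurd (by simpa using hm') (inv_pow_not_mem hSV hunit hg hg1 hc)
    have hnat : b * d < c * a := (nfrac_lt_nfrac ha.ne' hd.ne').1 hlt
    obtain ⟨m, hm3⟩ := Nat.exists_eq_add_of_lt hnat
    have hW := mul_mem (pow_mem hm' a) (pow_mem hmem d)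
    rw [ident_inv_contra f g a b c d, pow_split g _ _ m (by omega)] at hW
    exact inv_pow_not_mem hSV hunit hg hg1 (Nat.succ_ne_zero m) hW
  · refine le_of_forall_lt ?_
    intro z hz
    obtain ⟨p, q, hq, hzpq, hpq⟩ := exists_natfrac_btwn hz
    have hp : p ≠ 0 := by
      rintro rfl
      rw [Nat.cast_zero, ENNReal.zero_div] at hzpq
      exact (ENNReal.not_lt_zero hzpq)
    have hrv : rV V f g < (q : ℝ≥0∞) / p := by
      have h2 := ENNReal.inv_lt_inv' hpq
      rwa [inv_inv, nfrac_inv p q hp hq] at h2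
    have hmem := swap_mem hval (not_mem_of_rV_lt (by simp [hp]) hrv)
    exact lt_of_lt_of_le hzpq (le_rV (by simp [hq]) hmem)

lemma rV_part3 (hval : ∀ x : L, x ∈ V ∨ x⁻¹ ∈ V) (hSV : S ≤ V)
    (hunit : ∀ x : L, x ∈ S → x ∈ V → x⁻¹ ∈ V → x = 1)
    {f g h : L} (hf : f ∈ S) (hg : g ∈ S) (hh : h ∈ S) (hh1 : h ≠ 1) :
    rV V (f * g) h = rV V f h + rV V g h := by
  apply le_antisymm
  · refine sSup_le ?_
    rintro x ⟨a, b, h0, hmem, rfl⟩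
    rcases Nat.eq_zero_or_pos b with rfl | hb
    · have ha : a ≠ 0 := by rintro rfl; exact h0 rfl
      exact absurd (by simpa using hmem) (inv_pow_not_mem hSV hunit hh hh1 ha)
    by_contra hcon
    push_neg at hcon
    have habt : (a : ℝ≥0∞) / b ≠ ⊤ := nfrac_ne_top hb.ne'
    have hβt : rV V g h ≠ ⊤ := by
      intro e
      rw [e, add_top] at hcon
      exact not_top_lt hcon
    have h1 : rV V f h < (a : ℝ≥0∞) / b - rV V g h :=
      (ENNReal.cancel_of_ne hβt).lt_tsub_iff_right.2 hcon
    obtain ⟨p, q, hq, hu1, hu2⟩ := exists_natfrac_btwn h1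
    have h3 : (p : ℝ≥0∞) / q + rV V g h < (a : ℝ≥0∞) / b :=
      (ENNReal.cancel_of_ne hβt).lt_tsub_iff_right.1 hu2
    have h2 : rV V g h < (a : ℝ≥0∞) / b - (p : ℝ≥0∞) / q :=
      (ENNReal.cancel_of_ne (nfrac_ne_top hq)).lt_tsub_iff_right.2 (by rwa [add_comm] at h3)
    obtain ⟨p', q', hq', hv1, hv2⟩ := exists_natfrac_btwn h2
    have hsum : (p : ℝ≥0∞) / q + (p' : ℝ≥0∞) / q' < (a : ℝ≥0∞) / b := by
      have h4 := (ENNReal.cancel_of_ne (nfrac_ne_top hq)).lt_tsub_iff_right.1 hv2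
      rwa [add_comm] at h4
    have hnat : (p * q' + p' * q) * b < a * (q * q') := by
      rw [nfrac_add p q p' q' hq hq'] at hsum
      exact (nfrac_lt_nfrac (Nat.mul_ne_zero hq hq') hb.ne').1 hsum
    have hm1 : h ^ p * (f ^ q)⁻¹ ∈ V := swap_mem hval (not_mem_of_rV_lt (by simp [hq]) hu1)
    have hm2 : h ^ p' * (g ^ q')⁻¹ ∈ V := swap_mem hval (not_mem_of_rV_lt (by simp [hq']) hv1)
    obtain ⟨m, hm3⟩ := Nat.exists_eq_add_of_lt hnat
    have hW := mul_mem (mul_mem (pow_mem hm1 (b * q')) (pow_mem hm2 (b * q)))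
      (pow_mem hmem (q * q'))
    rw [ident_add_contra f g h a b p q p' q', pow_split h _ _ m (by omega)] at hW
    exact inv_pow_not_mem hSV hunit hh hh1 (Nat.succ_ne_zero m) hW
  · refine sSup_add_sSup_le ?_ ?_ ?_
    · exact ⟨0, 0, 1, by simp, by simpa using hSV hf, by simp⟩
    · exact ⟨0, 0, 1, by simp, by simpa using hSV hg, by simp⟩
    rintro x ⟨a, b, hab, hx, rfl⟩ y ⟨c, d, hcd, hy, rfl⟩
    rcases Nat.eq_zero_or_pos b with rfl | hb
    · have ha : a ≠ 0 := by rintro rfl; exact hab rfl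
      exact absurd (by simpa using hx) (inv_pow_not_mem hSV hunit hh hh1 ha)
    rcases Nat.eq_zero_or_pos d with rfl | hd
    · have hc : c ≠ 0 := by rintro rfl; exact hcd rfl
      exact absurd (by simpa using hy) (inv_pow_not_mem hSV hunit hh hh1 hc)
    rw [nfrac_add a b c d hb.ne' hd.ne']
    refine le_rV (by simp [Nat.mul_ne_zero hb.ne' hd.ne']) ?_
    rw [← ident_add f g h a b c d]
    exact mul_mem (pow_mem hx d) (pow_mem hy b)

lemma rV_part2 (hval : ∀ x : L, x ∈ V ∨ x⁻¹ ∈ V) (hSV : S ≤ V)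
    (hunit : ∀ x : L, x ∈ S → x ∈ V → x⁻¹ ∈ V → x = 1)
    {f g h : L} (hf : f ∈ S) (hg : g ∈ S) (hh : h ∈ S)
    (hf1 : f ≠ 1) (hg1 : g ≠ 1) (hh1 : h ≠ 1)
    (hex : ¬((rV V f g = 0 ∧ rV V g h = ⊤) ∨ (rV V f g = ⊤ ∧ rV V g h = 0))) :
    rV V f g * rV V g h = rV V f h := by
  apply le_antisymm
  · refine sSup_mul_sSup_le ?_
    rintro x ⟨a, b, hab, hx, rfl⟩ y ⟨c, d, hcd, hy, rfl⟩
    rcases Nat.eq_zero_or_pos b with rfl | hb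
    · have ha : a ≠ 0 := by rintro rfl; exact hab rfl
      exact absurd (by simpa using hx) (inv_pow_not_mem hSV hunit hg hg1 ha)
    rcases Nat.eq_zero_or_pos d with rfl | hd
    · have hc : c ≠ 0 := by rintro rfl; exact hcd rfl
      exact absurd (by simpa using hy) (inv_pow_not_mem hSV hunit hh hh1 hc)
    rw [nfrac_mul a b c d hb.ne' hd.ne']
    refine le_rV (by simp [Nat.mul_ne_zero hb.ne' hd.ne']) ?_
    rw [← ident_mul f g h a b c d]
    exact mul_mem (pow_mem hx d) (pow_mem hy a)
  · refine sSup_le ?_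
    rintro x ⟨a, b, hab, hx, rfl⟩
    rcases Nat.eq_zero_or_pos b with rfl | hb
    · have ha : a ≠ 0 := by rintro rfl; exact hab rfl
      exact absurd (by simpa using hx) (inv_pow_not_mem hSV hunit hh hh1 ha)
    rcases Nat.eq_zero_or_pos a with rfl | ha
    · simp
    rcases eq_or_ne (rV V f g * rV V g h) ⊤ with htop | htop
    · rw [htop]; exact le_top
    have hαt : rV V f g ≠ ⊤ := by
      intro e
      have hβ0 : rV V g h ≠ 0 := fun e' => hex (Or.inr ⟨e, e'⟩)
      exact htop (by rw [e, ENNReal.top_mul hβ0])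
    have hβt : rV V g h ≠ ⊤ := by
      intro e
      have hα0 : rV V f g ≠ 0 := fun e' => hex (Or.inl ⟨e', e⟩)
      exact htop (by rw [e, ENNReal.mul_top hα0])
    by_contra hcon
    push_neg at hcon
    have hab0 : (0 : ℝ≥0∞) < (a : ℝ≥0∞) / b :=
      ENNReal.div_pos (by exact_mod_cast ha.ne') (by exact_mod_cast ENNReal.natCast_ne_top b)
    obtain ⟨p', q', hq', hv1, hv2⟩ : ∃ p' q' : ℕ, q' ≠ 0 ∧ rV V g h < (p' : ℝ≥0∞) / q' ∧
        rV V f g * ((p' : ℝ≥0∞) / q') < (a : ℝ≥0∞) / b := by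
      rcases eq_or_ne (rV V f g) 0 with hz | hα0
      · obtain ⟨p', q', hq', hv1, hv2⟩ := exists_natfrac_btwn (lt_top_iff_ne_top.2 hβt)
        exact ⟨p', q', hq', hv1, by rw [hz, zero_mul]; exact hab0⟩
      · have hlt : rV V g h < ((a : ℝ≥0∞) / b) / rV V f g :=
          (ENNReal.lt_div_iff_mul_lt (Or.inl hα0) (Or.inl hαt)).2 (by rwa [mul_comm] at hcon)
        obtain ⟨p', q', hq', hv1, hv2'⟩ := exists_natfrac_btwn hlt
        refine ⟨p', q', hq', hv1, ?_⟩
        have h5 := ENNReal.mul_lt_of_lt_div hv2'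
        rwa [mul_comm] at h5
    have hv0 : (p' : ℝ≥0∞) / q' ≠ 0 := by
      intro e
      rw [e] at hv1
      exact ENNReal.not_lt_zero hv1
    have hlt2 : rV V f g < ((a : ℝ≥0∞) / b) / ((p' : ℝ≥0∞) / q') :=
      (ENNReal.lt_div_iff_mul_lt (Or.inl hv0) (Or.inl (nfrac_ne_top hq'))).2 hv2
    obtain ⟨p, q, hq, hu1, hu2'⟩ := exists_natfrac_btwn hlt2
    have hu2 : ((p : ℝ≥0∞) / q) * ((p' : ℝ≥0∞) / q') < (a : ℝ≥0∞) / b :=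
      ENNReal.mul_lt_of_lt_div hu2'
    have hnat : (p * p') * b < a * (q * q') := by
      rw [nfrac_mul p q p' q' hq hq'] at hu2
      exact (nfrac_lt_nfrac (Nat.mul_ne_zero hq hq') hb.ne').1 hu2
    have hm1 : g ^ p * (f ^ q)⁻¹ ∈ V := swap_mem hval (not_mem_of_rV_lt (by simp [hq]) hu1)
    have hm2 : h ^ p' * (g ^ q')⁻¹ ∈ V := swap_mem hval (not_mem_of_rV_lt (by simp [hq']) hv1)
    obtain ⟨m, hm3⟩ := Nat.exists_eq_add_of_lt hnat
    have hW := mul_mem (mul_mem (pow_mem hm1 (b * q')) (pow_mem hm2 (b * p)))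
      (pow_mem hx (q * q'))
    rw [ident_mul_contra f g h a b p q p' q', pow_split h _ _ m (by omega)] at hW
    exact inv_pow_not_mem hSV hunit hh hh1 (Nat.succ_ne_zero m) hW

end Main

theorem statement6 {L : Type*} [CommGroup L] (S : Submonoid L)
    (hgen : ∀ x : L, ∃ p ∈ S, ∃ q ∈ S, x = p * q⁻¹)
    (hfg : S.FG)
    (hsat : ∀ x : L, (∃ n : ℕ, 1 ≤ n ∧ x ^ n ∈ S) → x ∈ S)
    (hsharp : ∀ x : L, x ∈ S → x⁻¹ ∈ S → x = 1)
    (V : Submonoid L)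
    (hval : ∀ x : L, x ∈ V ∨ x⁻¹ ∈ V)
    (hSV : S ≤ V)
    (hunit : ∀ x : L, x ∈ S → x ∈ V → x⁻¹ ∈ V → x = 1) :
    (∀ f g : L, f ∈ S → g ∈ S → (f, g) ≠ (1, 1) →
      rV V g f = (rV V f g)⁻¹) ∧
    (∀ f g h : L, f ∈ S → g ∈ S → h ∈ S →
      (f, g) ≠ (1, 1) → (g, h) ≠ (1, 1) → (f, h) ≠ (1, 1) →
      ¬((rV V f g = 0 ∧ rV V g h = ⊤) ∨ (rV V f g = ⊤ ∧ rV V g h = 0)) →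
      rV V f g * rV V g h = rV V f h) ∧
    (∀ f g h : L, f ∈ S → g ∈ S → h ∈ S →
      (f, h) ≠ (1, 1) → (g, h) ≠ (1, 1) → (f * g, h) ≠ (1, 1) →
      rV V (f * g) h = rV V f h + rV V g h) := by
  refine ⟨?_, ?_, ?_⟩
  · intro f g hf hg hfg1
    exact rV_part1 hval hSV hunit hf hg hfg1
  · intro f g h hf hg hh hfg1 hgh1 hfh1 hex
    by_cases hg1 : g = 1
    · subst hg1
      exact absurd (Or.inr ⟨rV_one_right V f, rV_one_left hSV hunit hh (by simpa using hgh1)⟩) hex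
    by_cases hf1 : f = 1
    · subst hf1
      have hh1 : h ≠ 1 := by simpa using hfh1
      rw [rV_one_left hSV hunit hg hg1, rV_one_left hSV hunit hh hh1, zero_mul]
    by_cases hh1 : h = 1
    · subst hh1
      have hne : rV V f g ≠ 0 := fun e => hex (Or.inl ⟨e, rV_one_right V g⟩)
      rw [rV_one_right, rV_one_right, ENNReal.mul_top hne]
    exact rV_part2 hval hSV hunit hf hg hh hf1 hg1 hh1 hex
  · intro f g h hf hg hh hfh1 hgh1 hfgh1
    by_cases hh1 : h = 1
    · subst hh1
      rw [rV_one_right, rV_one_right, rV_one_right]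
      simp
    exact rV_part3 hval hSV hunit hf hg hh hh1
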